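/- Let K = ⟨x₁, …, x_n | x_i² = 1⟩ be the free product of n ≥ 2 copies of C₂, with B_n acting on K via α_i : x_i ↦ x_{i+1}, x_{i+1} ↦ x_{i+1} x_i x_{i+1}, x_j ↦ x_j (j ∉ {i, i+1}). Then the subgroup K^{B_n} of elements fixed by every braid automorphism is the infinite cyclic subgroup generated by δ = x₁x₂⋯x_n. -/

import Mathlib

/-- Relators for the free product `⋆_k C₂ = ⟨x₀, …, x_{k-1} | xᵢ² = 1⟩`. -/
def relC2s (k : ℕ) : Set (FreeGroup (Fin k)) :=
  {r | ∃ i : Fin k, r = FreeGroup.of i ^ 2}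

namespace Stmt15

open Fin.NatCast Fin.CommRing

attribute [local simp] List.Chain'

variable {m : ℕ}

abbrev KK (m : ℕ) := PresentedGroup (relC2s (m + 1))

/-- The generators. -/
def og (j : Fin (m + 1)) : KK m := PresentedGroup.of j

lemma og_mul_self (j : Fin (m + 1)) : og j * og j = (1 : KK m) := by
  show (QuotientGroup.mk (FreeGroup.of j * FreeGroup.of j) : KK m) = 1
  rw [QuotientGroup.eq_one_iff]
  exact Subgroup.subset_normalClosure ⟨j, (sq _).symm⟩

lemma og_inv (j : Fin (m + 1)) : (og j)⁻¹ = (og j : KK m) :=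
  inv_eq_of_mul_eq_one_right (og_mul_self j)

/-- The word map. -/
def mkw (l : List (Fin (m + 1))) : KK m := (l.map og).prod

@[simp] lemma mkw_nil : mkw ([] : List (Fin (m + 1))) = 1 := rfl

@[simp] lemma mkw_cons (a : Fin (m + 1)) (l : List (Fin (m + 1))) :
    mkw (a :: l) = og a * mkw l := by simp [mkw]

lemma mkw_append (s t : List (Fin (m + 1))) : mkw (s ++ t) = mkw s * mkw t := by
  simp [mkw]

lemma mkw_reverse (l : List (Fin (m + 1))) : (mkw l)⁻¹ = mkw l.reverse := by
  induction l with
  | nil => simp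
  | cons a t ih =>
      rw [mkw_cons, List.reverse_cons, mkw_append, mul_inv_rev, ih]
      simp [og_inv]

/-- Toggle a letter at the front of a reduced word. -/
def toggle (i : Fin (m + 1)) : List (Fin (m + 1)) → List (Fin (m + 1))
  | [] => [i]
  | a :: t => if a = i then t else i :: a :: t

@[simp] lemma toggle_nil (i : Fin (m + 1)) : toggle i [] = [i] := rfl

@[simp] lemma toggle_cons (i a : Fin (m + 1)) (t : List (Fin (m + 1))) :
    toggle i (a :: t) = if a = i then t else i :: a :: t := rfl

lemma toggle_red {i : Fin (m + 1)} {l : List (Fin (m + 1))} (h : l.Chain' (· ≠ ·)) :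
    (toggle i l).Chain' (· ≠ ·) := by
  cases l with
  | nil => simp
  | cons a t =>
      by_cases hai : a = i
      · simpa [hai] using h.tail
      · simpa [hai, List.isChain_cons_cons] using (List.isChain_cons_cons.2 ⟨fun h' => hai h'.symm, h⟩)

lemma toggle_toggle {i : Fin (m + 1)} {l : List (Fin (m + 1))} (h : l.Chain' (· ≠ ·)) :
    toggle i (toggle i l) = l := by
  cases l with
  | nil => simp
  | cons a t =>
      by_cases hai : a = i
      · subst hai
        rw [toggle_cons, if_pos rfl]
        cases t with
        | nil => simp
        | cons b t' =>
            have hb : a ≠ b := (List.isChain_cons_cons.1 h).1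
            rw [toggle_cons, if_neg (fun h' : b = a => hb h'.symm)]
      · simp [hai]

/-- Reduced words. -/
def Red (m : ℕ) := {l : List (Fin (m + 1)) // l.Chain' (· ≠ ·)}

def tperm (i : Fin (m + 1)) : Equiv.Perm (Red m) :=
  Function.Involutive.toPerm (fun p => ⟨toggle i p.1, toggle_red p.2⟩)
    (fun p => Subtype.ext (toggle_toggle p.2))

lemma tperm_apply (i : Fin (m + 1)) (p : Red m) :
    tperm i p = ⟨toggle i p.1, toggle_red p.2⟩ := rfl

/-- The action of `KK m` on reduced words. -/
def piR : KK m →* Equiv.Perm (Red m) :=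
  PresentedGroup.toGroup (f := tperm) (by
    rintro r ⟨i, rfl⟩
    rw [map_pow, FreeGroup.lift_apply_of]
    refine Equiv.ext fun p => ?_
    rw [sq, Equiv.Perm.mul_apply]
    show tperm i (tperm i p) = p
    exact Subtype.ext (toggle_toggle p.2))

lemma piR_og (i : Fin (m + 1)) : (piR (og i) : Equiv.Perm (Red m)) = tperm i :=
  PresentedGroup.toGroup.of _

/-- Normal form. -/
def NF (w : KK m) : List (Fin (m + 1)) := (piR w ⟨[], List.isChain_nil⟩).1

lemma NF_red (w : KK m) : (NF w).Chain' (· ≠ ·) := (piR w ⟨[], List.isChain_nil⟩).2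

@[simp] lemma NF_one : NF (1 : KK m) = [] := by
  simp [NF]
  rfl

lemma NF_og_mul (i : Fin (m + 1)) (w : KK m) : NF (og i * w) = toggle i (NF w) := by
  show ((piR (og i * w)) ⟨[], (List.isChain_nil : List.Chain' _ [])⟩).1 = _
  simp only [map_mul, Equiv.Perm.mul_apply, piR_og, tperm_apply]
  rfl

lemma NF_mkw {l : List (Fin (m + 1))} (h : l.Chain' (· ≠ ·)) : NF (mkw l) = l := by
  induction l with
  | nil => simp
  | cons a t ih =>
      rw [mkw_cons, NF_og_mul, ih h.tail]
      cases t with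
      | nil => simp
      | cons b t' =>
          have hb : a ≠ b := (List.isChain_cons_cons.1 h).1
          rw [toggle_cons, if_neg (fun h' : b = a => hb h'.symm)]

lemma exists_mkw (w : KK m) : ∃ l, mkw l = w := by
  refine PresentedGroup.generated_by _
    { carrier := {w | ∃ l, mkw l = w}
      one_mem' := ⟨[], rfl⟩
      mul_mem' := ?_
      inv_mem' := ?_ } (fun j => ⟨[j], by simp [og]⟩) w
  · rintro a b ⟨l1, rfl⟩ ⟨l2, rfl⟩
    exact ⟨l1 ++ l2, mkw_append _ _⟩
  · rintro a ⟨l, rfl⟩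
    exact ⟨l.reverse, (mkw_reverse l).symm⟩

lemma mkw_NF_mkw (l : List (Fin (m + 1))) : mkw (NF (mkw l)) = mkw l := by
  induction l with
  | nil => simp
  | cons a t ih =>
      have key : NF (mkw (a :: t)) = toggle a (NF (mkw t)) := by
        rw [mkw_cons, NF_og_mul]
      rw [key]
      rcases hu : NF (mkw t) with _ | ⟨b, s⟩
      · rw [hu] at ih
        simp only [mkw_nil] at ih
        simp [← ih]
      · rw [hu] at ih
        by_cases hba : b = a
        · subst hba
          rw [toggle_cons, if_pos rfl, mkw_cons]
          have h2 : og b * mkw s = mkw t := by simpa using ih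
          rw [← h2, ← mul_assoc, og_mul_self, one_mul]
        · rw [toggle_cons, if_neg hba, mkw_cons, ih, ← mkw_cons]

lemma mkw_NF (w : KK m) : mkw (NF w) = w := by
  obtain ⟨l, rfl⟩ := exists_mkw w
  exact mkw_NF_mkw l

lemma red_reverse {l : List (Fin (m + 1))} (h : l.Chain' (· ≠ ·)) :
    l.reverse.Chain' (· ≠ ·) :=
  List.isChain_reverse.mpr (List.IsChain.imp (fun a b hab => Ne.symm hab) h)

lemma NF_inv (w : KK m) : NF w⁻¹ = (NF w).reverse := by
  conv_lhs => rw [← mkw_NF w]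
  rw [mkw_reverse, NF_mkw (red_reverse (NF_red w))]

lemma NF_concat {u : List (Fin (m + 1))} (h : u.Chain' (· ≠ ·)) (a : Fin (m + 1)) :
    NF (mkw (u ++ [a])) = (toggle a u.reverse).reverse := by
  have h1 : mkw (u ++ [a]) = (mkw (a :: u.reverse))⁻¹ := by
    rw [mkw_reverse, List.reverse_cons, List.reverse_reverse]
  rw [h1, NF_inv, mkw_cons, NF_og_mul, NF_mkw (red_reverse h)]


/-! ### The rotation endomorphism -/

def rot (j : Fin (m + 1)) : Fin (m + 1) := j - 1

lemma rot_inj : Function.Injective (rot (m := m)) := fun a b h => by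
  have := congrArg (· + 1) h
  simpa [rot, sub_add_cancel] using this

def sig : KK m →* KK m :=
  PresentedGroup.toGroup (f := fun j => og (rot j)) (by
    rintro r ⟨i, rfl⟩
    rw [map_pow, FreeGroup.lift_apply_of, sq]
    exact og_mul_self _)

lemma sig_og (j : Fin (m + 1)) : sig (og j) = og (rot j) :=
  PresentedGroup.toGroup.of _

lemma sig_mkw (l : List (Fin (m + 1))) : sig (mkw l) = mkw (l.map rot) := by
  induction l with
  | nil => simp
  | cons a t ih => rw [mkw_cons, map_mul, sig_og, ih, List.map_cons, mkw_cons]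

lemma NF_sig (w : KK m) : NF (sig w) = (NF w).map rot := by
  conv_lhs => rw [← mkw_NF w, sig_mkw]
  exact NF_mkw (List.isChain_map_of_isChain rot (fun a b hab => rot_inj.ne hab) (NF_red w))

/-! ### Ascending words -/

def asc : Fin (m + 1) → ℕ → List (Fin (m + 1))
  | _, 0 => []
  | a, k + 1 => a :: asc (a + 1) k

@[simp] lemma asc_zero (a : Fin (m + 1)) : asc a 0 = [] := rfl

@[simp] lemma asc_succ (a : Fin (m + 1)) (k : ℕ) : asc a (k + 1) = a :: asc (a + 1) k := rfl

@[simp] lemma asc_length (a : Fin (m + 1)) (k : ℕ) : (asc a k).length = k := by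
  induction k generalizing a with
  | zero => rfl
  | succ k ih => simp [ih]

lemma one_ne_zero' (hm : 1 ≤ m) : (1 : Fin (m + 1)) ≠ 0 := by
  intro h
  have h1 : ((1 : Fin (m + 1)) : ℕ) = 1 % (m + 1) := rfl
  have h2 : 1 % (m + 1) = 1 := Nat.mod_eq_of_lt (by omega)
  have := congrArg Fin.val h
  rw [h1, h2] at this
  simp at this

lemma self_ne_add_one (hm : 1 ≤ m) (a : Fin (m + 1)) : a ≠ a + 1 := by
  intro h
  have : (0 : Fin (m + 1)) = 1 := by
    have := congrArg (fun x => x - a) h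
    simpa [sub_self, add_sub_cancel_left, add_comm] using this
  exact one_ne_zero' hm this.symm

lemma asc_red (hm : 1 ≤ m) (a : Fin (m + 1)) (k : ℕ) : (asc a k).Chain' (· ≠ ·) := by
  induction k generalizing a with
  | zero => simp
  | succ k ih =>
      cases k with
      | zero => simp
      | succ k' =>
          rw [asc_succ, asc_succ, List.Chain', List.isChain_cons_cons]
          exact ⟨self_ne_add_one hm a, by rw [← asc_succ]; exact ih _⟩

lemma asc_append (a : Fin (m + 1)) (s t : ℕ) :
    asc a (s + t) = asc a s ++ asc (a + (s : Fin (m + 1))) t := by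
  induction s generalizing a with
  | zero => simp
  | succ s ih =>
      have : s + 1 + t = (s + t) + 1 := by omega
      rw [this, asc_succ, asc_succ, ih (a + 1), List.cons_append]
      congr 2
      push_cast
      ring

lemma asc_concat (a : Fin (m + 1)) (k : ℕ) :
    asc a (k + 1) = asc a k ++ [a + (k : Fin (m + 1))] := by
  rw [asc_append a k 1]
  rfl

lemma asc_getLast? (a : Fin (m + 1)) (k : ℕ) :
    (asc a (k + 1)).getLast? = some (a + (k : Fin (m + 1))) := by
  rw [asc_concat, List.getLast?_append]
  rfl

lemma natCast_mul_self (q : ℕ) : ((q * (m + 1) : ℕ) : Fin (m + 1)) = 0 := by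
  apply Fin.ext
  rw [Fin.val_natCast]
  simp [Nat.mul_mod_left]

lemma mkw_asc_block (q : ℕ) :
    mkw (asc (0 : Fin (m + 1)) (q * (m + 1))) = (mkw (asc 0 (m + 1))) ^ q := by
  induction q with
  | zero => simp
  | succ q ih =>
      have h1 : (q + 1) * (m + 1) = q * (m + 1) + (m + 1) := by ring
      rw [h1, asc_append, mkw_append, ih, natCast_mul_self, add_zero, pow_succ]



/-! ### Recognizing ascending words -/

lemma ascOf : ∀ (u : List (Fin (m + 1))) (a : Fin (m + 1)),
    u.map rot = a :: u.dropLast → u = asc (a + 1) u.length := by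
  intro u
  induction u with
  | nil => intro a h; simp at h
  | cons b t ih =>
      intro a h
      rw [List.map_cons] at h
      injection h with h1 h2
      have hb : b = a + 1 := by
        have : b - 1 = a := h1
        rwa [sub_eq_iff_eq_add] at this
      cases t with
      | nil => simp [hb]
      | cons c t' =>
          have h2' : (c :: t').map rot = b :: (c :: t').dropLast := by
            rw [h2, List.dropLast_cons₂]
          have := ih b h2'
          rw [List.length_cons, asc_succ, ← hb, ← this]

lemma asc_eq_ofFn (k : ℕ) (a : Fin (m + 1)) :
    asc a k = List.ofFn (fun j : Fin k => a + ((j : ℕ) : Fin (m + 1))) := by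
  induction k generalizing a with
  | zero => simp
  | succ k ih =>
      rw [List.ofFn_succ, asc_succ, ih (a + 1)]
      congr 1
      · simp
      · congr 1
        funext j
        rw [Fin.val_succ]
        push_cast
        ring

lemma delta_eq :
    (List.ofFn fun j : Fin (m + 1) => (og j : KK m)).prod = mkw (asc 0 (m + 1)) := by
  rw [asc_eq_ofFn]
  simp only [zero_add, Fin.cast_val_eq_self]
  rw [mkw, List.map_ofFn]
  rfl

/-! ### The braid automorphisms -/

section Braid

variable (φ : Fin m → MulAut (KK m))

def BraidHyp : Prop :=
  ∀ (i : Fin m) (j : Fin (m + 1)),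
      φ i (PresentedGroup.of j) =
        if j = i.castSucc then PresentedGroup.of i.succ
        else if j = i.succ then
          PresentedGroup.of i.succ * PresentedGroup.of i.castSucc * PresentedGroup.of i.succ
        else PresentedGroup.of j

variable {φ}

lemma hA (hφ : BraidHyp φ) (i : Fin m) : φ i (og i.castSucc) = og i.succ := by
  have := hφ i i.castSucc
  rwa [if_pos rfl] at this

lemma succ_ne_castSucc (i : Fin m) : (i.succ : Fin (m + 1)) ≠ i.castSucc := by
  intro h
  have := congrArg Fin.val h
  rw [Fin.val_succ, Fin.coe_castSucc] at this
  omega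

lemma hB (hφ : BraidHyp φ) (i : Fin m) :
    φ i (og i.succ) = og i.succ * og i.castSucc * og i.succ := by
  have := hφ i i.succ
  rwa [if_neg (succ_ne_castSucc i), if_pos rfl] at this

lemma hC (hφ : BraidHyp φ) (i : Fin m) (j : Fin (m + 1))
    (h1 : (j : ℕ) ≠ (i : ℕ)) (h2 : (j : ℕ) ≠ (i : ℕ) + 1) :
    φ i (og j) = og j := by
  have := hφ i j
  rw [if_neg, if_neg] at this
  · exact this
  · exact fun h => h2 (by rw [h, Fin.val_succ])
  · exact fun h => h1 (by rw [h, Fin.coe_castSucc])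

def Phi (φ : Fin m → MulAut (KK m)) : ℕ → (KK m →* KK m)
  | 0 => MonoidHom.id _
  | k + 1 => if h : k < m then ((φ ⟨k, h⟩).toMonoidHom.comp (Phi φ k)) else Phi φ k

lemma Phi_fix {w : KK m} (hw : ∀ i, φ i w = w) : ∀ k, Phi φ k w = w
  | 0 => rfl
  | k + 1 => by
      rw [Phi]
      split_ifs with h
      · rw [MonoidHom.comp_apply, Phi_fix hw k]
        exact hw ⟨k, h⟩
      · exact Phi_fix hw k

lemma val_natCast_of_le {k : ℕ} (hk : k ≤ m) : (((k : ℕ) : Fin (m + 1)) : ℕ) = k := by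
  rw [Fin.val_natCast]
  exact Nat.mod_eq_of_lt (by omega)

lemma natCast_last : ((m : ℕ) : Fin (m + 1)) = Fin.last m :=
  Fin.ext (by rw [val_natCast_of_le le_rfl]; rfl)

lemma Phi_og (hφ : BraidHyp φ) :
    ∀ k, k ≤ m → ∀ j : Fin (m + 1),
      Phi φ k (og j) =
        if (j : ℕ) = 0 then og ((k : ℕ) : Fin (m + 1))
        else if (j : ℕ) ≤ k then
          og ((k : ℕ) : Fin (m + 1)) * og ((((j : ℕ) - 1 : ℕ)) : Fin (m + 1)) *
            og ((k : ℕ) : Fin (m + 1))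
        else og j := by
  intro k
  induction k with
  | zero =>
      intro hk j
      by_cases h0 : (j : ℕ) = 0
      · rw [if_pos h0]
        have : j = ((0 : ℕ) : Fin (m + 1)) :=
          Fin.ext (by rw [h0, val_natCast_of_le (by omega)])
        rw [this]
        rfl
      · rw [if_neg h0, if_neg (by omega)]
        rfl
  | succ k ih =>
      intro hk j
      have hj := j.isLt
      have hkm : k < m := by omega
      have hPhi : ∀ v, Phi φ (k + 1) v = φ ⟨k, hkm⟩ (Phi φ k v) := by
        intro v
        rw [Phi, dif_pos hkm]
        rfl
      have hcs : ((⟨k, hkm⟩ : Fin m).castSucc : Fin (m + 1)) = ((k : ℕ) : Fin (m + 1)) :=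
        Fin.ext (by rw [Fin.coe_castSucc, val_natCast_of_le (by omega)])
      have hsc : ((⟨k, hkm⟩ : Fin m).succ : Fin (m + 1)) = (((k + 1 : ℕ)) : Fin (m + 1)) :=
        Fin.ext (by rw [Fin.val_succ, val_natCast_of_le (by omega)])
      rw [hPhi, ih (by omega) j]
      by_cases h0 : (j : ℕ) = 0
      · rw [if_pos h0, if_pos h0, ← hcs, hA hφ, hsc]
      · rw [if_neg h0, if_neg h0]
        by_cases h1 : (j : ℕ) ≤ k
        · rw [if_pos h1, if_pos (show (j : ℕ) ≤ k + 1 by omega)]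
          rw [map_mul, map_mul, ← hcs, hA hφ, hsc]
          have hfix : φ ⟨k, hkm⟩ (og ((((j : ℕ) - 1 : ℕ)) : Fin (m + 1))) =
              og ((((j : ℕ) - 1 : ℕ)) : Fin (m + 1)) := by
            refine hC hφ _ _ ?_ ?_
            · rw [val_natCast_of_le (by omega)]
              show (j : ℕ) - 1 ≠ k
              omega
            · rw [val_natCast_of_le (by omega)]
              show (j : ℕ) - 1 ≠ k + 1
              omega
          rw [hfix]
        · rw [if_neg h1]
          by_cases h2 : (j : ℕ) = k + 1
          · rw [if_pos (by omega)]
            have hjs : j = (⟨k, hkm⟩ : Fin m).succ := Fin.ext (by rw [Fin.val_succ]; exact h2)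
            rw [hjs, hB hφ, hsc, hcs]
            have hv : ((((k + 1 : ℕ)) : Fin (m + 1)) : ℕ) - 1 = k := by
              rw [val_natCast_of_le (by omega)]
              omega
            rw [hv]

          · rw [if_neg (by omega)]
            refine hC hφ _ _ ?_ ?_
            · show (j : ℕ) ≠ k
              omega
            · show (j : ℕ) ≠ k + 1
              omega

lemma Phi_m_og (hφ : BraidHyp φ) (j : Fin (m + 1)) :
    Phi φ m (og j) = og (Fin.last m) * og (rot j) * og (Fin.last m) := by
  have hj := j.isLt
  rw [Phi_og hφ m le_rfl j, natCast_last]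
  by_cases h0 : (j : ℕ) = 0
  · rw [if_pos h0]
    have hrot : rot j = Fin.last m := by
      apply Fin.ext
      have hj0 : j = 0 := Fin.ext (by simpa using h0)
      show ((j - 1 : Fin (m + 1)) : ℕ) = m
      rw [hj0, Fin.coe_sub_one, if_pos rfl]
    rw [hrot, og_mul_self, one_mul]
  · rw [if_neg h0, if_pos (by omega)]
    have hrot : rot j = (((j : ℕ) - 1 : ℕ) : Fin (m + 1)) := by
      apply Fin.ext
      show ((j - 1 : Fin (m + 1)) : ℕ) = ((((j : ℕ) - 1 : ℕ) : Fin (m + 1)) : ℕ)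
      rw [Fin.coe_sub_one, if_neg (fun h => h0 (by rw [h]; rfl)), val_natCast_of_le (by omega)]
    rw [hrot]

lemma conj_mul_conj (L : KK m) (hL : L * L = 1) (x y : KK m) :
    (L * x * L) * (L * y * L) = L * (x * y) * L := by
  have : (L * x * L) * (L * y * L) = L * x * (L * L) * y * L := by group
  rw [this, hL, mul_one]
  group

lemma sig_fixed (hφ : BraidHyp φ) {w : KK m} (hw : ∀ i, φ i w = w) :
    sig w = og (Fin.last m) * w * og (Fin.last m) := by
  have hsq := og_mul_self (Fin.last m)
  have h2 : ∀ v : KK m, Phi φ m v = og (Fin.last m) * sig v * og (Fin.last m) := by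
    intro v
    obtain ⟨l, rfl⟩ := exists_mkw v
    induction l with
    | nil =>
        simp only [mkw_nil, map_one, mul_one]
        rw [hsq]
    | cons a t ih =>
        rw [mkw_cons, map_mul, map_mul, ih, Phi_m_og hφ a, sig_og,
          conj_mul_conj _ hsq]
  have h1 : Phi φ m w = w := Phi_fix hw m
  have h3 := (h2 w).symm.trans h1
  -- h3 : L * sig w * L = w
  calc sig w = og (Fin.last m) * (og (Fin.last m) * sig w * og (Fin.last m)) * og (Fin.last m) := by
        have : og (Fin.last m) * (og (Fin.last m) * sig w * og (Fin.last m)) * og (Fin.last m)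
            = (og (Fin.last m) * og (Fin.last m)) * sig w * (og (Fin.last m) * og (Fin.last m)) := by
          group
        rw [this, hsq, one_mul, mul_one]
    _ = og (Fin.last m) * w * og (Fin.last m) := by rw [h3]

lemma phi_claim (hφ : BraidHyp φ) (i : Fin m) :
    ∀ k, k ≤ m + 1 → φ i (mkw (asc 0 k)) =
      if k = (i : ℕ) + 1 then mkw (asc 0 (i : ℕ)) * og i.succ else mkw (asc 0 k)
  | 0, _ => by rw [if_neg (by omega)]; simp
  | k + 1, hk => by
      rw [asc_concat, mkw_append, map_mul, phi_claim hφ i k (by omega)]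
      have hone : mkw [(0 : Fin (m + 1)) + (k : Fin (m + 1))] = og ((0 : Fin (m + 1)) + (k : Fin (m + 1))) := by
        simp
      rw [hone]
      have hval : ((0 : Fin (m + 1)) + (k : Fin (m + 1))).val = k := by
        rw [zero_add]
        exact val_natCast_of_le (by omega)
      by_cases hki : k = (i : ℕ)
      · rw [if_neg (by omega), if_pos (by omega)]
        have : (0 : Fin (m + 1)) + (k : Fin (m + 1)) = i.castSucc :=
          Fin.ext (by rw [hval, Fin.coe_castSucc, hki])
        rw [this, hA hφ, hki]
      · by_cases hki1 : k = (i : ℕ) + 1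
        · rw [if_pos hki1, if_neg (by omega)]
          have : (0 : Fin (m + 1)) + (k : Fin (m + 1)) = i.succ :=
            Fin.ext (by rw [hval, Fin.val_succ, hki1])
          rw [this, hB hφ]
          have hcast : (0 : Fin (m + 1)) + (((i : ℕ)) : Fin (m + 1)) = i.castSucc :=
            Fin.ext (by
              rw [zero_add, val_natCast_of_le (by omega), Fin.coe_castSucc])
          have hstep : mkw (asc (0 : Fin (m + 1)) k) = mkw (asc 0 (i : ℕ)) * og i.castSucc := by
            rw [hki1, asc_concat, hcast, mkw_append]
            simp
          rw [hstep]
          have hsq := og_mul_self (i.succ : Fin (m + 1))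
          have hgr : mkw (asc 0 (i : ℕ)) * og i.succ * (og i.succ * og i.castSucc * og i.succ)
              = mkw (asc 0 (i : ℕ)) * (og i.succ * og i.succ) * (og i.castSucc * og i.succ) := by
            group
          rw [hgr, hsq, mul_one, ← mul_assoc]
        · rw [if_neg hki1, if_neg (by omega)]
          have hfix : φ i (og ((0 : Fin (m + 1)) + (k : Fin (m + 1)))) = og ((0 : Fin (m + 1)) + (k : Fin (m + 1))) :=
            hC hφ _ _ (by rw [hval]; exact hki) (by rw [hval]; exact hki1)
          rw [hfix]

lemma phi_delta (hφ : BraidHyp φ) (i : Fin m) :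
    φ i (mkw (asc 0 (m + 1))) = mkw (asc 0 (m + 1)) := by
  have := phi_claim hφ i (m + 1) le_rfl
  rwa [if_neg (by have := i.isLt; omega)] at this

end Braid


lemma exists_block (hm : 1 ≤ m) {L : ℕ} (hL : 1 ≤ L) (h : (L - 1) % (m + 1) = m) :
    ∃ t, L = (t + 1) * (m + 1) := by
  have hdiv := Nat.div_add_mod (L - 1) (m + 1)
  refine ⟨(L - 1) / (m + 1), ?_⟩
  rw [h] at hdiv
  have h2 : ((L - 1) / (m + 1) + 1) * (m + 1) = (m + 1) * ((L - 1) / (m + 1)) + (m + 1) := by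
    ring
  rw [h2]
  generalize (m + 1) * ((L - 1) / (m + 1)) = T at hdiv ⊢
  omega

lemma mod_of_last {L : ℕ}
    (h : (0 : Fin (m + 1)) + (((L - 1 : ℕ)) : Fin (m + 1)) = Fin.last m) :
    (L - 1) % (m + 1) = m := by
  have := congrArg Fin.val h
  rwa [zero_add, Fin.val_natCast] at this

lemma mem_pow_block (hm : 1 ≤ m) {w : KK m} {L : ℕ} (hw : mkw (NF w) = w)
    (hasc : NF w = asc 0 L) (ht : ∃ t, L = (t + 1) * (m + 1)) :
    w ∈ Subgroup.zpowers (mkw (asc (0 : Fin (m + 1)) (m + 1))) := by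
  obtain ⟨t, rfl⟩ := ht
  rw [← hw, hasc, mkw_asc_block]
  exact Subgroup.mem_zpowers_iff.mpr ⟨((t : ℤ) + 1), by
    rw [show ((t : ℤ) + 1) = ((t + 1 : ℕ) : ℤ) by push_cast; ring, zpow_natCast]⟩

lemma mem_pow_block_inv (hm : 1 ≤ m) {w : KK m} {L : ℕ} (hw : mkw (NF w) = w)
    (hasc : NF w = (asc 0 L).reverse) (ht : ∃ t, L = (t + 1) * (m + 1)) :
    w ∈ Subgroup.zpowers (mkw (asc (0 : Fin (m + 1)) (m + 1))) := by
  obtain ⟨t, rfl⟩ := ht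
  have : w = (mkw (asc (0 : Fin (m + 1)) ((t + 1) * (m + 1))))⁻¹ := by
    rw [← hw, hasc, ← mkw_reverse]
  rw [this, mkw_asc_block]
  exact Subgroup.mem_zpowers_iff.mpr ⟨-((t : ℤ) + 1), by
    rw [show (-((t : ℤ) + 1)) = -((t + 1 : ℕ) : ℤ) by push_cast; ring, zpow_neg, zpow_natCast]⟩

lemma rot_last_ne (hm : 1 ≤ m) : rot (Fin.last m) ≠ Fin.last m := by
  intro h
  have hne : Fin.last m ≠ 0 := by
    intro h0
    have := congrArg Fin.val h0
    rw [Fin.val_last] at this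
    simp at this
    omega
  have := congrArg Fin.val h
  rw [show rot (Fin.last m) = Fin.last m - 1 from rfl, Fin.coe_sub_one, if_neg hne,
    Fin.val_last] at this
  omega

end Stmt15

theorem stmt15 (m : ℕ) (hm : 1 ≤ m)
    (φ : Fin m → MulAut (PresentedGroup (relC2s (m + 1))))
    (hφ : ∀ (i : Fin m) (j : Fin (m + 1)),
      φ i (PresentedGroup.of j) =
        if j = i.castSucc then PresentedGroup.of i.succ
        else if j = i.succ then
          PresentedGroup.of i.succ * PresentedGroup.of i.castSucc * PresentedGroup.of i.succ
        else PresentedGroup.of j) :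
    ¬ IsOfFinOrder
      ((List.ofFn fun j : Fin (m + 1) =>
        (PresentedGroup.of j : PresentedGroup (relC2s (m + 1)))).prod) ∧
    ∀ w : PresentedGroup (relC2s (m + 1)),
      (∀ i : Fin m, φ i w = w) ↔
      w ∈ Subgroup.zpowers
        (List.ofFn fun j : Fin (m + 1) =>
          (PresentedGroup.of j : PresentedGroup (relC2s (m + 1)))).prod := by
  classical
  have hBH : Stmt15.BraidHyp φ := hφ
  have hδ : (List.ofFn fun j : Fin (m + 1) =>
      (PresentedGroup.of j : PresentedGroup (relC2s (m + 1)))).prod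
      = Stmt15.mkw (Stmt15.asc 0 (m + 1)) := Stmt15.delta_eq
  rw [hδ]
  constructor
  · rw [isOfFinOrder_iff_pow_eq_one]
    rintro ⟨t, ht, h1⟩
    rw [← Stmt15.mkw_asc_block] at h1
    have h2 := congrArg Stmt15.NF h1
    rw [Stmt15.NF_mkw (Stmt15.asc_red hm _ _), Stmt15.NF_one] at h2
    have h3 := congrArg List.length h2
    rw [Stmt15.asc_length] at h3
    simp at h3
    omega
  · intro w
    constructor
    · intro hw
      have hsig := Stmt15.sig_fixed hBH hw
      have hred := Stmt15.NF_red w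
      have hwu := Stmt15.mkw_NF w
      have hE : (Stmt15.NF w).map Stmt15.rot
          = Stmt15.toggle (Fin.last m)
              ((Stmt15.toggle (Fin.last m) (Stmt15.NF w).reverse).reverse) := by
        have e2 : w * Stmt15.og (Fin.last m)
            = Stmt15.mkw (Stmt15.NF w ++ [Fin.last m]) := by
          rw [Stmt15.mkw_append, hwu]
          simp
        rw [← Stmt15.NF_sig w, hsig, mul_assoc, e2, Stmt15.NF_og_mul,
          Stmt15.NF_concat hred]
      set u := Stmt15.NF w with hu
      rcases hrev : u.reverse with _ | ⟨z, s⟩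
      · have hunil : u = [] := by
          have := congrArg List.reverse hrev
          simpa using this
        rw [hunil] at hwu
        simp at hwu
        rw [← hwu]
        exact Subgroup.one_mem _
      · have hus : u = s.reverse ++ [z] := by
          have := congrArg List.reverse hrev
          simpa using this
        have hulen : 1 ≤ u.length := by
          rw [hus]
          simp
        by_cases hz : z = Fin.last m
        · subst hz
          rw [hrev, Stmt15.toggle_cons, if_pos rfl] at hE
          rcases hsrev : s.reverse with _ | ⟨c, d⟩
          · have hs : s = [] := by simpa using congrArg List.reverse hsrev
            exfalso
            rw [hus, hs] at hE
            simp at hE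
            exact Stmt15.rot_last_ne hm hE
          · rw [hsrev, Stmt15.toggle_cons] at hE
            by_cases hc : c = Fin.last m
            · exfalso
              rw [if_pos hc] at hE
              have hlen := congrArg List.length hE
              rw [List.length_map, hus, hsrev] at hlen
              simp at hlen
              omega
            · rw [if_neg hc] at hE
              have hdrop : u.dropLast = s.reverse := by
                rw [hus, List.dropLast_concat]
              have hE' : u.map Stmt15.rot = Fin.last m :: u.dropLast := by
                rw [hE, hdrop, hsrev]
              have hasc := Stmt15.ascOf u (Fin.last m) hE'
              rw [Fin.last_add_one] at hasc
              have hlast : u.getLast? = some (Fin.last m) := by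
                rw [hus]
                exact List.getLast?_concat
              have hlen1 : u.length = (u.length - 1) + 1 := by omega
              rw [hasc, hlen1, Stmt15.asc_getLast?] at hlast
              have hmod := Stmt15.mod_of_last (Option.some.inj hlast)
              exact Stmt15.mem_pow_block hm hwu (by rw [← hu]; exact hasc)
                (Stmt15.exists_block hm hulen hmod)
        · rw [hrev, Stmt15.toggle_cons, if_neg hz] at hE
          have hrw : (Fin.last m :: z :: s).reverse = u ++ [Fin.last m] := by
            rw [List.reverse_cons, ← hrev, List.reverse_reverse]
          rw [hrw] at hE
          rcases hcons : u with _ | ⟨h0, t0⟩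
          · rw [hcons] at hrev
            simp at hrev
          · rw [hcons, List.cons_append, Stmt15.toggle_cons] at hE
            by_cases hh : h0 = Fin.last m
            · rw [if_pos hh] at hE
              have hE2 : ((h0 :: t0).reverse).map Stmt15.rot
                  = Fin.last m :: ((h0 :: t0).reverse).dropLast := by
                have hrevE := congrArg List.reverse hE
                rw [← List.map_reverse] at hrevE
                rw [hrevE]
                simp
              have hasc := Stmt15.ascOf (h0 :: t0).reverse (Fin.last m) hE2
              rw [Fin.last_add_one, List.length_reverse] at hasc
              have hlast : ((h0 :: t0).reverse).getLast? = some (Fin.last m) := by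
                rw [List.reverse_cons, ← hh]
                exact List.getLast?_concat
              have hlen0 : (h0 :: t0).length = ((h0 :: t0).length - 1) + 1 := by simp
              rw [hasc, hlen0, Stmt15.asc_getLast?] at hlast
              have hmod := Stmt15.mod_of_last (Option.some.inj hlast)
              have huasc : Stmt15.NF w = (Stmt15.asc 0 (h0 :: t0).length).reverse := by
                rw [← hu, hcons, ← hasc, List.reverse_reverse]
              refine Stmt15.mem_pow_block_inv hm hwu huasc
                (Stmt15.exists_block hm ?_ hmod)
              simp
            · exfalso
              rw [if_neg hh] at hE
              have hlen := congrArg List.length hE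
              rw [List.length_map] at hlen
              simp at hlen
    · intro hmem i
      obtain ⟨k, hk⟩ := Subgroup.mem_zpowers_iff.mp hmem
      rw [← hk, map_zpow, Stmt15.phi_delta hBH i]
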